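/- The associated partial Bell polynomials B^{(r)}_{n,k}(w) (parts of size at most r) satisfy the recurrence B^{(r)}_{n+1,k}(w) = Σ_{i = max(0, n-rk+r)}^{min(r-1, n-k+1)} C(n,i) · w_{i+1} · B^{(r)}_{n-i, k-1}(w), for k ≤ n+1 ≤ rk, with the convention B^{(r)}_{i,0}(w) = δ_{i,0}. -/

import Mathlib

open Finset

/-- The associated partial Bell polynomial `B^{(r)}_{n,k}(w)` (all parts of size at most `r`). -/
noncomputable def BellUpper (w : ℕ → ℝ) (r n k : ℕ) : ℝ :=
  (Nat.factorial n : ℝ) *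
    ∑ s ∈ (Finset.Iic (fun _ => n : Fin n → ℕ)).filter
        (fun s => (∑ i, (i.1 + 1) * s i) = n ∧ (∑ i, s i) = k ∧
          ∀ i : Fin n, r < i.1 + 1 → s i = 0),
      ∏ i, (w (i.1 + 1) / (Nat.factorial (i.1 + 1) : ℝ)) ^ s i /
        (Nat.factorial (s i) : ℝ)

lemma sum_extend {M : Type*} [AddCommMonoid M] {m N : ℕ} (hm : m ≤ N)
    (g : ℕ → ℕ → M) (hg : ∀ i, g i 0 = 0) (s : Fin m → ℕ) :
    (∑ i : Fin N, g i.1 (if h : i.1 < m then s ⟨i.1, h⟩ else 0)) =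
      ∑ i : Fin m, g i.1 (s i) := by
  rw [Fin.sum_univ_eq_sum_range (fun i => g i (if h : i < m then s ⟨i, h⟩ else 0)) N]
  have h2 : (∑ i : Fin m, g i.1 (s i)) =
      ∑ i ∈ Finset.range m, g i (if h : i < m then s ⟨i, h⟩ else 0) := by
    rw [← Fin.sum_univ_eq_sum_range (fun i => g i (if h : i < m then s ⟨i, h⟩ else 0)) m]
    exact Finset.sum_congr rfl fun i _ => by rw [dif_pos i.2]
  rw [h2, Finset.range_eq_Ico, ← Finset.sum_Ico_consecutive _ (Nat.zero_le m) hm,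
    ← Finset.range_eq_Ico]
  have h3 : (∑ i ∈ Finset.Ico m N, g i (if h : i < m then s ⟨i, h⟩ else 0)) = 0 :=
    Finset.sum_eq_zero fun i hi => by
      rw [dif_neg (by exact Nat.not_lt.mpr (Finset.mem_Ico.mp hi).1), hg]
  rw [h3, add_zero]

lemma prod_extend {M : Type*} [CommMonoid M] {m N : ℕ} (hm : m ≤ N)
    (g : ℕ → ℕ → M) (hg : ∀ i, g i 0 = 1) (s : Fin m → ℕ) :
    (∏ i : Fin N, g i.1 (if h : i.1 < m then s ⟨i.1, h⟩ else 0)) =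
      ∏ i : Fin m, g i.1 (s i) := by
  rw [Fin.prod_univ_eq_prod_range (fun i => g i (if h : i < m then s ⟨i, h⟩ else 0)) N]
  have h2 : (∏ i : Fin m, g i.1 (s i)) =
      ∏ i ∈ Finset.range m, g i (if h : i < m then s ⟨i, h⟩ else 0) := by
    rw [← Fin.prod_univ_eq_prod_range (fun i => g i (if h : i < m then s ⟨i, h⟩ else 0)) m]
    exact Finset.prod_congr rfl fun i _ => by rw [dif_pos i.2]
  rw [h2, Finset.range_eq_Ico, ← Finset.prod_Ico_consecutive _ (Nat.zero_le m) hm,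
    ← Finset.range_eq_Ico]
  have h3 : (∏ i ∈ Finset.Ico m N, g i (if h : i < m then s ⟨i, h⟩ else 0)) = 1 :=
    Finset.prod_eq_one fun i hi => by
      rw [dif_neg (by exact Nat.not_lt.mpr (Finset.mem_Ico.mp hi).1), hg]
  rw [h3, mul_one]

/-- The product appearing in `BellUpper`, over a fixed index size `N`. -/
noncomputable def bellP (w : ℕ → ℝ) (N : ℕ) (s : Fin N → ℕ) : ℝ :=
  ∏ i, (w (i.1 + 1) / (Nat.factorial (i.1 + 1) : ℝ)) ^ s i / (Nat.factorial (s i) : ℝ)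

/-- The index set for `B^{(r)}_{m,k}`, realized inside `Fin N → ℕ`. -/
def bellT (r N m k : ℕ) : Finset (Fin N → ℕ) :=
  (Finset.Iic (fun _ => N)).filter
    (fun s => (∑ i, (i.1 + 1) * s i) = m ∧ (∑ i, s i) = k ∧
      ∀ i : Fin N, r < i.1 + 1 → s i = 0)

lemma mem_bellT {r N m k : ℕ} {s : Fin N → ℕ} :
    s ∈ bellT r N m k ↔ (∀ i, s i ≤ N) ∧ (∑ i, (i.1 + 1) * s i) = m ∧
      (∑ i, s i) = k ∧ ∀ i : Fin N, r < i.1 + 1 → s i = 0 := by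
  simp [bellT, Finset.mem_filter, Finset.mem_Iic, Pi.le_def, and_assoc]

lemma bell_eq (w : ℕ → ℝ) (r N m k : ℕ) (hm : m ≤ N) :
    BellUpper w r m k = (Nat.factorial m : ℝ) * ∑ s ∈ bellT r N m k, bellP w N s := by
  unfold BellUpper
  congr 1
  apply Finset.sum_nbij' (i := fun s => fun i : Fin N => if h : i.1 < m then s ⟨i.1, h⟩ else 0)
    (j := fun t => fun i : Fin m => t ⟨i.1, lt_of_lt_of_le i.2 hm⟩)
  · intro s hs
    simp only [Finset.mem_filter, Finset.mem_Iic, Pi.le_def] at hs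
    obtain ⟨hbox, h1, h2, h3⟩ := hs
    rw [mem_bellT]
    refine ⟨?_, ?_, ?_, ?_⟩
    · intro i
      by_cases h : i.1 < m
      · rw [dif_pos h]; exact le_trans (hbox _) hm
      · rw [dif_neg h]; exact Nat.zero_le _
    · rw [sum_extend hm (fun a b => (a + 1) * b) (fun a => Nat.mul_zero _) s]; exact h1
    · rw [sum_extend hm (fun _ b => b) (fun _ => rfl) s]; exact h2
    · intro i hi
      by_cases h : i.1 < m
      · rw [dif_pos h]; exact h3 ⟨i.1, h⟩ hi
      · rw [dif_neg h]
  · intro t ht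
    rw [mem_bellT] at ht
    obtain ⟨hbox, h1, h2, h3⟩ := ht
    have hzero : ∀ i : Fin N, ¬ i.1 < m → t i = 0 := by
      intro i hi
      by_contra hne
      have h1' : (i.1 + 1) * t i ≤ ∑ j : Fin N, (j.1 + 1) * t j :=
        Finset.single_le_sum (f := fun j : Fin N => (j.1 + 1) * t j)
          (fun j _ => Nat.zero_le _) (Finset.mem_univ i)
      rw [h1] at h1'
      have : i.1 + 1 ≤ (i.1 + 1) * t i := Nat.le_mul_of_pos_right _ (Nat.pos_of_ne_zero hne)
      omega
    have hext : (fun i : Fin N => if h : i.1 < m then t ⟨i.1, lt_of_lt_of_le h hm⟩ else 0) = t := by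
      funext i
      by_cases h : i.1 < m
      · rw [dif_pos h]
      · rw [dif_neg h, (hzero i h).symm]
    clear hext
    simp only [Finset.mem_filter, Finset.mem_Iic, Pi.le_def]
    refine ⟨?_, ?_, ?_, ?_⟩
    · intro i
      have h1' := Finset.single_le_sum (f := fun j : Fin N => (j.1 + 1) * t j)
          (fun j _ => Nat.zero_le _) (Finset.mem_univ ⟨i.1, lt_of_lt_of_le i.2 hm⟩)
      rw [h1] at h1'
      exact le_trans (Nat.le_mul_of_pos_left _ (Nat.succ_pos i.1)) h1'
    · rw [← sum_extend hm (fun a b => (a + 1) * b) (fun a => Nat.mul_zero _)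
        (fun i : Fin m => t ⟨i.1, lt_of_lt_of_le i.2 hm⟩)]
      refine Eq.trans (Finset.sum_congr rfl fun i _ => ?_) h1
      by_cases h : i.1 < m
      · rw [dif_pos h]
      · rw [dif_neg h, hzero i h]
    · rw [← sum_extend hm (fun _ b => b) (fun _ => rfl)
        (fun i : Fin m => t ⟨i.1, lt_of_lt_of_le i.2 hm⟩)]
      refine Eq.trans (Finset.sum_congr rfl fun i _ => ?_) h2
      by_cases h : i.1 < m
      · rw [dif_pos h]
      · rw [dif_neg h, hzero i h]
    · intro i hi
      exact h3 ⟨i.1, lt_of_lt_of_le i.2 hm⟩ hi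
  · intro s hs
    funext i
    simp only [dif_pos i.2]
  · intro t ht
    rw [mem_bellT] at ht
    obtain ⟨hbox, h1, h2, h3⟩ := ht
    have hzero : ∀ i : Fin N, ¬ i.1 < m → t i = 0 := by
      intro i hi
      by_contra hne
      have h1' : (i.1 + 1) * t i ≤ ∑ j : Fin N, (j.1 + 1) * t j :=
        Finset.single_le_sum (f := fun j : Fin N => (j.1 + 1) * t j)
          (fun j _ => Nat.zero_le _) (Finset.mem_univ i)
      rw [h1] at h1'
      have : i.1 + 1 ≤ (i.1 + 1) * t i := Nat.le_mul_of_pos_right _ (Nat.pos_of_ne_zero hne)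
      omega
    funext i
    by_cases h : i.1 < m
    · rw [dif_pos h]
    · rw [dif_neg h, (hzero i h).symm]
  · intro s hs
    unfold bellP
    exact (prod_extend hm
      (fun a b => (w (a + 1) / (Nat.factorial (a + 1) : ℝ)) ^ b / (Nat.factorial b : ℝ))
      (fun a => by simp) s).symm

lemma bell_zero_of_lt (w : ℕ → ℝ) (r m k : ℕ) (h : m < k) : BellUpper w r m k = 0 := by
  unfold BellUpper
  rw [Finset.sum_eq_zero, mul_zero]
  intro s hs
  simp only [Finset.mem_filter] at hs
  obtain ⟨-, h1, h2, -⟩ := hs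
  have : (∑ i, s i) ≤ ∑ i : Fin m, (i.1 + 1) * s i :=
    Finset.sum_le_sum fun i _ => Nat.le_mul_of_pos_left _ (Nat.succ_pos i.1)
  omega

lemma bell_zero_of_gt (w : ℕ → ℝ) (r m k : ℕ) (h : r * k < m) : BellUpper w r m k = 0 := by
  unfold BellUpper
  rw [Finset.sum_eq_zero, mul_zero]
  intro s hs
  simp only [Finset.mem_filter] at hs
  obtain ⟨-, h1, h2, h3⟩ := hs
  have hle : (∑ i : Fin m, (i.1 + 1) * s i) ≤ ∑ i : Fin m, r * s i := by
    refine Finset.sum_le_sum fun i _ => ?_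
    by_cases hz : s i = 0
    · simp [hz]
    · have : i.1 + 1 ≤ r := by
        by_contra hc
        exact hz (h3 i (by omega))
      exact Nat.mul_le_mul_right _ this
  rw [← Finset.mul_sum, h2] at hle
  omega

lemma sum_comp_update {M : Type*} [AddCommMonoid M] {N : ℕ} (g : Fin N → ℕ → M)
    (s : Fin N → ℕ) (j : Fin N) (b : ℕ) :
    (∑ i, g i (Function.update s j b i)) = g j b + ∑ i ∈ Finset.univ.erase j, g i (s i) := by
  have h : (fun i => g i (Function.update s j b i)) =
      Function.update (fun i => g i (s i)) j (g j b) := by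
    funext i
    by_cases hi : i = j
    · subst hi; simp
    · rw [Function.update_of_ne hi, Function.update_of_ne hi]
  rw [h, Finset.sum_update_of_mem (Finset.mem_univ j), Finset.sdiff_singleton_eq_erase]

lemma prod_comp_update {M : Type*} [CommMonoid M] {N : ℕ} (g : Fin N → ℕ → M)
    (s : Fin N → ℕ) (j : Fin N) (b : ℕ) :
    (∏ i, g i (Function.update s j b i)) = g j b * ∏ i ∈ Finset.univ.erase j, g i (s i) := by
  have h : (fun i => g i (Function.update s j b i)) =
      Function.update (fun i => g i (s i)) j (g j b) := by
    funext i
    by_cases hi : i = j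
    · subst hi; simp
    · rw [Function.update_of_ne hi, Function.update_of_ne hi]
  rw [h, Finset.prod_update_of_mem (Finset.mem_univ j), Finset.sdiff_singleton_eq_erase]

lemma sum_split {M : Type*} [AddCommMonoid M] {N : ℕ} (g : Fin N → ℕ → M)
    (s : Fin N → ℕ) (j : Fin N) :
    (∑ i, g i (s i)) = g j (s j) + ∑ i ∈ Finset.univ.erase j, g i (s i) :=
  (Finset.add_sum_erase _ _ (Finset.mem_univ j)).symm

lemma prod_split {M : Type*} [CommMonoid M] {N : ℕ} (g : Fin N → ℕ → M)
    (s : Fin N → ℕ) (j : Fin N) :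
    (∏ i, g i (s i)) = g j (s j) * ∏ i ∈ Finset.univ.erase j, g i (s i) :=
  (Finset.mul_prod_erase _ _ (Finset.mem_univ j)).symm

lemma bell_scalar (w : ℝ) (a c : ℕ) :
    ((a+1) * (c+1) : ℝ) * ((w / (Nat.factorial (a+1)))^(c+1) / (Nat.factorial (c+1))) =
      w / (Nat.factorial a) * ((w / (Nat.factorial (a+1)))^c / (Nat.factorial c)) := by
  have f1 : (Nat.factorial (a+1) : ℝ) = (a+1) * Nat.factorial a := by
    push_cast [Nat.factorial_succ]; ring
  have f2 : (Nat.factorial (c+1) : ℝ) = (c+1) * Nat.factorial c := by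
    push_cast [Nat.factorial_succ]; ring
  have n1 : (Nat.factorial a : ℝ) ≠ 0 := Nat.cast_ne_zero.2 (Nat.factorial_ne_zero a)
  have n2 : (Nat.factorial c : ℝ) ≠ 0 := Nat.cast_ne_zero.2 (Nat.factorial_ne_zero c)
  have n3 : ((a:ℝ)+1) ≠ 0 := by positivity
  have n4 : ((c:ℝ)+1) ≠ 0 := by positivity
  rw [pow_succ, f1, f2]
  field_simp

lemma bell_key (w : ℕ → ℝ) (r n k : ℕ) (hk1 : 1 ≤ k) (j : Fin (n+1)) (hj : j.1 + 1 ≤ r) :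
    (∑ s ∈ bellT r (n+1) (n+1) k, (((j.1 + 1) * s j : ℕ) : ℝ) * bellP w (n+1) s) =
      w (j.1 + 1) / (Nat.factorial j.1 : ℝ) *
        ∑ t ∈ bellT r (n+1) (n - j.1) (k-1), bellP w (n+1) t := by
  rw [Finset.mul_sum]
  rw [← Finset.sum_filter_of_ne (p := fun s => s j ≠ 0)
    (fun s _ hne => by
      intro hz
      apply hne
      rw [hz, Nat.mul_zero, Nat.cast_zero, zero_mul])]
  apply Finset.sum_nbij' (i := fun s => Function.update s j (s j - 1))
    (j := fun t => Function.update t j (t j + 1))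
  · intro s hs
    rw [Finset.mem_filter, mem_bellT] at hs
    obtain ⟨⟨hbox, h1, h2, h3⟩, hnz⟩ := hs
    have hs1 := sum_split (fun i b => (i.1 + 1) * b) s j
    have hs2 := sum_split (fun _ b => b) s j
    rw [h1] at hs1
    rw [h2] at hs2
    rw [mem_bellT]
    refine ⟨?_, ?_, ?_, ?_⟩
    · intro i
      rcases eq_or_ne i j with h | h
      · subst h; rw [Function.update_self]; exact le_trans (Nat.sub_le _ _) (hbox i)
      · rw [Function.update_of_ne h]; exact hbox i
    · rw [sum_comp_update (fun i b => (i.1 + 1) * b)]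
      have hmul : (j.1 + 1) * (s j - 1) + (j.1 + 1) = (j.1 + 1) * s j := by
        rw [← Nat.mul_succ]
        congr 1
        omega
      have hjn : j.1 < n + 1 := j.2
      omega
    · rw [sum_comp_update (fun _ b => b)]
      omega
    · intro i hi
      rcases eq_or_ne i j with h | h
      · subst h; omega
      · rw [Function.update_of_ne h]; exact h3 i hi
  · intro t ht
    rw [mem_bellT] at ht
    obtain ⟨hbox, h1, h2, h3⟩ := ht
    have hs1 := sum_split (fun i b => (i.1 + 1) * b) t j
    have hs2 := sum_split (fun _ b => b) t j
    rw [h1] at hs1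
    rw [h2] at hs2
    have hjn : j.1 < n + 1 := j.2
    have htj : t j ≤ n := by
      have e1 : t j ≤ (j.1 + 1) * t j := Nat.le_mul_of_pos_left _ (Nat.succ_pos _)
      omega
    rw [Finset.mem_filter, mem_bellT]
    refine ⟨⟨?_, ?_, ?_, ?_⟩, ?_⟩
    · intro i
      rcases eq_or_ne i j with h | h
      · subst h; rw [Function.update_self]; omega
      · rw [Function.update_of_ne h]; exact hbox i
    · rw [sum_comp_update (fun i b => (i.1 + 1) * b)]
      have hmul : (j.1 + 1) * (t j + 1) = (j.1 + 1) * t j + (j.1 + 1) := Nat.mul_succ _ _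
      omega
    · rw [sum_comp_update (fun _ b => b)]
      omega
    · intro i hi
      rcases eq_or_ne i j with h | h
      · subst h; omega
      · rw [Function.update_of_ne h]; exact h3 i hi
    · rw [Function.update_self]; omega
  · intro s hs
    rw [Finset.mem_filter] at hs
    have hnz := hs.2
    rw [Function.update_idem, Function.update_self]
    have : s j - 1 + 1 = s j := by omega
    rw [this, Function.update_eq_self]
  · intro t ht
    rw [Function.update_idem, Function.update_self]
    rw [Nat.add_sub_cancel, Function.update_eq_self]
  · intro s hs
    rw [Finset.mem_filter] at hs
    have hnz := hs.2
    obtain ⟨c, hc⟩ : ∃ c, s j = c + 1 := ⟨s j - 1, by omega⟩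
    unfold bellP
    rw [prod_split (fun i b => (w (i.1 + 1) / (Nat.factorial (i.1 + 1) : ℝ)) ^ b /
      (Nat.factorial b : ℝ)) s j]
    rw [prod_comp_update (fun i b => (w (i.1 + 1) / (Nat.factorial (i.1 + 1) : ℝ)) ^ b /
      (Nat.factorial b : ℝ))]
    rw [hc, Nat.add_sub_cancel]
    push_cast
    rw [← mul_assoc, ← mul_assoc]
    congr 1
    exact bell_scalar (w (j.1 + 1)) j.1 c

/-- the recurrence
`B^{(r)}_{n+1,k}(w) = Σ_{i=max(0,n-rk+r)}^{min(r-1,n-k+1)} C(n,i)·w_{i+1}·B^{(r)}_{n-i,k-1}(w)`. -/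
theorem assoc_partial_bell_upper_recurrence
    (w : ℕ → ℝ) (hw : ∀ i, 0 ≤ w i) (r n k : ℕ)
    (hk : k ≤ n + 1) (hrk : n + 1 ≤ r * k) :
    BellUpper w r (n + 1) k =
      ∑ i ∈ Finset.Icc (n + r - r * k) (min (r - 1) (n + 1 - k)),
        (Nat.choose n i : ℝ) * w (i + 1) * BellUpper w r (n - i) (k - 1) := by
  have hk1 : 1 ≤ k := by
    rcases Nat.eq_zero_or_pos k with h | h
    · subst h; simp at hrk
    · exact h
  have hr1 : 1 ≤ r := by
    rcases Nat.eq_zero_or_pos r with h | h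
    · subst h; simp at hrk
    · exact h
  have hA : BellUpper w r (n + 1) k =
      (Nat.factorial (n + 1) : ℝ) * ∑ s ∈ bellT r (n+1) (n+1) k, bellP w (n+1) s :=
    bell_eq w r (n+1) (n+1) k le_rfl
  have hB : ∀ s ∈ bellT r (n+1) (n+1) k,
      ((n : ℝ) + 1) * bellP w (n+1) s =
        ∑ j : Fin (n+1), (((j.1 + 1) * s j : ℕ) : ℝ) * bellP w (n+1) s := by
    intro s hs
    rw [mem_bellT] at hs
    obtain ⟨-, h1, -, -⟩ := hs
    rw [← Finset.sum_mul]
    congr 1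
    rw [← Nat.cast_sum, h1]
    push_cast
    ring
  have hC : BellUpper w r (n + 1) k =
      ∑ j : Fin (n+1), (Nat.factorial n : ℝ) *
        ∑ s ∈ bellT r (n+1) (n+1) k, (((j.1 + 1) * s j : ℕ) : ℝ) * bellP w (n+1) s := by
    rw [hA]
    rw [show (∑ j : Fin (n+1), (Nat.factorial n : ℝ) *
        ∑ s ∈ bellT r (n+1) (n+1) k, (((j.1 + 1) * s j : ℕ) : ℝ) * bellP w (n+1) s) =
      (Nat.factorial n : ℝ) * ∑ j : Fin (n+1),
        ∑ s ∈ bellT r (n+1) (n+1) k, (((j.1 + 1) * s j : ℕ) : ℝ) * bellP w (n+1) s from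
      (Finset.mul_sum _ _ _).symm]
    rw [Finset.sum_comm, Finset.mul_sum, Finset.mul_sum]
    refine Finset.sum_congr rfl fun s hs => ?_
    rw [← hB s hs]
    push_cast [Nat.factorial_succ]
    ring
  have hF : ∀ j : Fin (n+1), (Nat.factorial n : ℝ) *
      (∑ s ∈ bellT r (n+1) (n+1) k, (((j.1 + 1) * s j : ℕ) : ℝ) * bellP w (n+1) s) =
      if j.1 + 1 ≤ r then
        (Nat.choose n j.1 : ℝ) * w (j.1 + 1) * BellUpper w r (n - j.1) (k - 1)
      else 0 := by
    intro j
    by_cases hj : j.1 + 1 ≤ r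
    · rw [if_pos hj, bell_key w r n k hk1 j hj]
      have hjn : j.1 ≤ n := by have := j.2; omega
      have hBell := bell_eq w r (n+1) (n - j.1) (k-1) (by omega)
      have hne1 : ((n - j.1).factorial : ℝ) ≠ 0 := Nat.cast_ne_zero.2 (Nat.factorial_ne_zero _)
      have hne2 : ((j.1).factorial : ℝ) ≠ 0 := Nat.cast_ne_zero.2 (Nat.factorial_ne_zero _)
      have hsum : (∑ t ∈ bellT r (n+1) (n - j.1) (k-1), bellP w (n+1) t) =
          BellUpper w r (n - j.1) (k - 1) / ((n - j.1).factorial : ℝ) := by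
        rw [hBell]; field_simp
      rw [hsum, Nat.cast_choose ℝ hjn]
      field_simp
    · rw [if_neg hj]
      rw [Finset.sum_eq_zero, mul_zero]
      intro s hs
      rw [mem_bellT] at hs
      rw [hs.2.2.2 j (by omega), Nat.mul_zero, Nat.cast_zero, zero_mul]
  rw [hC]
  rw [Finset.sum_congr rfl fun j _ => hF j]
  rw [Fin.sum_univ_eq_sum_range (fun i => if i + 1 ≤ r then
    (Nat.choose n i : ℝ) * w (i + 1) * BellUpper w r (n - i) (k - 1) else 0) (n+1)]
  have hsub : Finset.Icc (n + r - r * k) (min (r - 1) (n + 1 - k)) ⊆ Finset.range (n + 1) := by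
    intro x hx
    rw [Finset.mem_Icc] at hx
    rw [Finset.mem_range]
    omega
  have hvanish : ∀ x ∈ Finset.range (n + 1),
      x ∉ Finset.Icc (n + r - r * k) (min (r - 1) (n + 1 - k)) →
      (if x + 1 ≤ r then
        (Nat.choose n x : ℝ) * w (x + 1) * BellUpper w r (n - x) (k - 1) else 0) = 0 := by
    intro x hx hnx
    rw [Finset.mem_range] at hx
    rw [Finset.mem_Icc] at hnx
    by_cases hxr : x + 1 ≤ r
    · rw [if_pos hxr]
      have hmul : r * (k - 1) + r = r * k := by
        rw [← Nat.mul_succ]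
        congr 1
        omega
      rcases (by omega : x < n + r - r * k ∨ n + 1 - k < x) with hcase | hcase
      · rw [bell_zero_of_gt w r (n - x) (k - 1) (by omega), mul_zero]
      · rw [bell_zero_of_lt w r (n - x) (k - 1) (by omega), mul_zero]
    · rw [if_neg hxr]
  rw [← Finset.sum_subset hsub hvanish]
  refine Finset.sum_congr rfl fun i hi => ?_
  rw [Finset.mem_Icc] at hi
  rw [if_pos (by omega)]
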